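/- Let Q be a finite acyclic quiver, V a representation of Q over ℂ, and σ : Q₀ → ℤ a weight. Let Q₀⁺ = {s ∈ Q₀ : σ(s) > 0} and Q₀⁻ = {t ∈ Q₀ : σ(t) < 0}. Then the maximum of σ(dim W) over all subrepresentations W of V equals the maximum, over all families (U_s)_{s∈Q₀⁺} of subspaces U_s ≤ V(s), of ( Σ_{s∈Q₀⁺} σ(s)·dim U_s − Σ_{t∈Q₀⁻} (−σ(t))·dim ( Σ_{s∈Q₀⁺} Σ_{P : s–t path in Q} V(P)(U_s) ) ), where the inner sum of subspaces ranges over all directed paths P from s to t in Q and V(P) := V(a_k)∘⋯∘V(a₁) for P = (a₁,…,a_k). -/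

import Mathlib

/-- A list of arcs (with tail map `tl` and head map `hd`) forms a directed closed walk. -/
def IsClosedWalk {I A : Type} (tl hd : A → I) (l : List A) (hne : l ≠ []) : Prop :=
  l.Chain' (fun a b => hd a = tl b) ∧ hd (l.getLast hne) = tl (l.head hne)

/-- A quiver is acyclic if it has no directed closed walk. -/
def IsAcyclic {I A : Type} (tl hd : A → I) : Prop :=
  ∀ (l : List A) (hne : l ≠ []), ¬ IsClosedWalk tl hd l hne

/-- `PathReach tl hd Vm S U j w` holds iff `w = V(P)(u)` for some directed path `P`
(of length at least one) from some vertex `s ∈ S` to `j` and some `u ∈ U s`.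
Hence `span {w | PathReach tl hd Vm S U j w} = Σ_{s ∈ S} Σ_{P : s–j path} V(P)(U_s)`. -/
inductive PathReach {I A : Type} {Vv : I → Type} [∀ i, AddCommGroup (Vv i)]
    [∀ i, Module ℂ (Vv i)] (tl hd : A → I)
    (Vm : ∀ a : A, Vv (tl a) →ₗ[ℂ] Vv (hd a))
    (S : Set I) (U : ∀ i, Submodule ℂ (Vv i)) : (j : I) → Vv j → Prop
  | base (a : A) (hta : tl a ∈ S) (u : Vv (tl a)) (hu : u ∈ U (tl a)) :
      PathReach tl hd Vm S U (hd a) (Vm a u)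
  | step (a : A) (u : Vv (tl a)) (hu : PathReach tl hd Vm S U (tl a) u) :
      PathReach tl hd Vm S U (hd a) (Vm a u)

/-- Splitting a weighted sum over all vertices into the positive and negative parts. -/
lemma king_sum_split {I : Type} [Fintype I] (σ : I → ℤ) (f : I → ℤ) :
    ∑ i : I, σ i * f i
      = ∑ i ∈ Finset.univ.filter (fun i => 0 < σ i), σ i * f i
        + ∑ i ∈ Finset.univ.filter (fun i => σ i < 0), σ i * f i := by
  classical
  rw [← Finset.sum_filter_add_sum_filter_not Finset.univ (fun i => 0 < σ i) (fun i => σ i * f i)]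
  congr 1
  refine (Finset.sum_subset ?_ ?_).symm
  · intro i hi
    simp only [Finset.mem_filter, Finset.mem_univ, true_and] at hi ⊢
    omega
  · intro i hi hni
    simp only [Finset.mem_filter, Finset.mem_univ, true_and] at hi hni
    have : σ i = 0 := by omega
    simp [this]

/-- If `W` is a subrepresentation containing `U`, it contains everything path-reachable
from `U`. -/
lemma king_pathreach_mem {I A : Type} {Vv : I → Type} [∀ i, AddCommGroup (Vv i)]
    [∀ i, Module ℂ (Vv i)] (tl hd : A → I)
    (Vm : ∀ a : A, Vv (tl a) →ₗ[ℂ] Vv (hd a)) (S : Set I)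
    (U W : ∀ i, Submodule ℂ (Vv i))
    (hW : ∀ a : A, (W (tl a)).map (Vm a) ≤ W (hd a))
    (hUW : ∀ i, U i ≤ W i) :
    ∀ (j : I) (w : Vv j), PathReach tl hd Vm S U j w → w ∈ W j := by
  intro j w h
  induction h with
  | base a hta u hu => exact hW a (Submodule.mem_map_of_mem (hUW _ hu))
  | step a u hu ih => exact hW a (Submodule.mem_map_of_mem ih)

/-- The maximum of `σ(dim W)` over subrepresentations `W` equals the maximum over
families `(U_s)_{s : σ(s) > 0}` of subspaces of
`Σ_{σ(s)>0} σ(s)·dim U_s − Σ_{σ(t)<0} (−σ(t))·dim(Σ_{s,P : s–t path} V(P)(U_s))`. -/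
theorem king_maximizer_eq_shrunk_value
    {I A : Type} [Fintype I] [Fintype A]
    (tl hd : A → I) (hacyc : IsAcyclic tl hd)
    (Vv : I → Type) [∀ i, AddCommGroup (Vv i)] [∀ i, Module ℂ (Vv i)]
    [∀ i, FiniteDimensional ℂ (Vv i)]
    (Vm : ∀ a : A, Vv (tl a) →ₗ[ℂ] Vv (hd a))
    (σ : I → ℤ) :
    ∃ z : ℤ,
      IsGreatest {z : ℤ | ∃ W : ∀ i, Submodule ℂ (Vv i),
        (∀ a : A, (W (tl a)).map (Vm a) ≤ W (hd a)) ∧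
        z = ∑ i : I, σ i * (Module.finrank ℂ (W i) : ℤ)} z ∧
      IsGreatest {z : ℤ | ∃ U : ∀ i, Submodule ℂ (Vv i),
        z = (∑ s ∈ Finset.univ.filter (fun s => 0 < σ s),
              σ s * (Module.finrank ℂ (U s) : ℤ))
          - ∑ t ∈ Finset.univ.filter (fun t => σ t < 0),
              (-σ t) * (Module.finrank ℂ
                (Submodule.span ℂ
                  {w : Vv t | PathReach tl hd Vm {i : I | 0 < σ i} U t w}) : ℤ)} z := by
  classical
  set S : Set I := {i : I | 0 < σ i} with hSdef
  set R : (∀ i, Submodule ℂ (Vv i)) → ∀ j, Submodule ℂ (Vv j) :=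
    fun U j => Submodule.span ℂ {w : Vv j | PathReach tl hd Vm S U j w} with hRdef
  set P1 : ℤ → Prop := fun z => ∃ W : ∀ i, Submodule ℂ (Vv i),
      (∀ a : A, (W (tl a)).map (Vm a) ≤ W (hd a)) ∧
      z = ∑ i : I, σ i * (Module.finrank ℂ (W i) : ℤ) with hP1
  set P2 : ℤ → Prop := fun z => ∃ U : ∀ i, Submodule ℂ (Vv i),
      z = (∑ s ∈ Finset.univ.filter (fun s => 0 < σ s),
            σ s * (Module.finrank ℂ (U s) : ℤ))
        - ∑ t ∈ Finset.univ.filter (fun t => σ t < 0),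
            (-σ t) * (Module.finrank ℂ (R U t) : ℤ) with hP2
  -- a common upper bound
  have hbd1 : ∀ z : ℤ, P1 z → z ≤ ∑ i : I, |σ i| * (Module.finrank ℂ (Vv i) : ℤ) := by
    rintro z ⟨W, -, rfl⟩
    refine Finset.sum_le_sum fun i _ => ?_
    calc σ i * (Module.finrank ℂ (W i) : ℤ)
        ≤ |σ i| * (Module.finrank ℂ (W i) : ℤ) :=
          mul_le_mul_of_nonneg_right (le_abs_self _) (by positivity)
      _ ≤ |σ i| * (Module.finrank ℂ (Vv i) : ℤ) := by
          refine mul_le_mul_of_nonneg_left ?_ (abs_nonneg _)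
          exact_mod_cast Submodule.finrank_le (W i)
  have hbd2 : ∀ z : ℤ, P2 z → z ≤ ∑ i : I, |σ i| * (Module.finrank ℂ (Vv i) : ℤ) := by
    rintro z ⟨U, rfl⟩
    have h1 : (0 : ℤ) ≤ ∑ t ∈ Finset.univ.filter (fun t => σ t < 0),
        (-σ t) * (Module.finrank ℂ (R U t) : ℤ) := by
      refine Finset.sum_nonneg fun t ht => ?_
      simp only [Finset.mem_filter, Finset.mem_univ, true_and] at ht
      have : (0:ℤ) ≤ -σ t := by omega
      positivity
    have h2 : (∑ s ∈ Finset.univ.filter (fun s => 0 < σ s),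
          σ s * (Module.finrank ℂ (U s) : ℤ))
        ≤ ∑ i : I, |σ i| * (Module.finrank ℂ (Vv i) : ℤ) := by
      refine le_trans (Finset.sum_le_sum fun i _ => ?_)
        (Finset.sum_le_sum_of_subset_of_nonneg (Finset.filter_subset _ _)
          (fun i _ _ => by positivity))
      calc σ i * (Module.finrank ℂ (U i) : ℤ)
          ≤ |σ i| * (Module.finrank ℂ (U i) : ℤ) :=
            mul_le_mul_of_nonneg_right (le_abs_self _) (by positivity)
        _ ≤ |σ i| * (Module.finrank ℂ (Vv i) : ℤ) := by
            refine mul_le_mul_of_nonneg_left ?_ (abs_nonneg _)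
            exact_mod_cast Submodule.finrank_le (U i)
    omega
  -- nonemptiness
  have hne1 : ∃ z, P1 z := by
    refine ⟨∑ i : I, σ i * (Module.finrank ℂ ((⊥ : Submodule ℂ (Vv i))) : ℤ),
      fun i => ⊥, fun a => ?_, rfl⟩
    simp
  have hne2 : ∃ z, P2 z :=
    ⟨_, (fun _ => (⊥ : Submodule ℂ (Vv _))), rfl⟩
  obtain ⟨z1, hz1, hz1ub⟩ := Int.exists_greatest_of_bdd ⟨_, hbd1⟩ hne1
  obtain ⟨z2, hz2, hz2ub⟩ := Int.exists_greatest_of_bdd ⟨_, hbd2⟩ hne2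
  -- z1 ≤ z2 : from a subrep W, take U := W
  have h12 : z1 ≤ z2 := by
    obtain ⟨W, hWsub, rfl⟩ := hz1
    refine le_trans ?_ (hz2ub _ ⟨W, rfl⟩)
    rw [king_sum_split σ (fun i => (Module.finrank ℂ (W i) : ℤ)), sub_eq_add_neg,
      ← Finset.sum_neg_distrib]
    refine add_le_add le_rfl (Finset.sum_le_sum fun t ht => ?_)
    simp only [Finset.mem_filter, Finset.mem_univ, true_and] at ht
    have hRW : R W t ≤ W t := by
      rw [hRdef]
      refine Submodule.span_le.mpr fun w hw => ?_
      exact king_pathreach_mem tl hd Vm S W W hWsub (fun i => le_rfl) t w hw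
    have : (Module.finrank ℂ (R W t) : ℤ) ≤ (Module.finrank ℂ (W t) : ℤ) := by
      exact_mod_cast Submodule.finrank_mono hRW
    nlinarith
  -- z2 ≤ z1 : from U, build the subrep W := (U on positive vertices) ⊔ reachable span
  have h21 : z2 ≤ z1 := by
    obtain ⟨U, rfl⟩ := hz2
    set W : ∀ i, Submodule ℂ (Vv i) :=
      fun i => (if 0 < σ i then U i else ⊥) ⊔ R U i with hWdef
    have hWsub : ∀ a : A, (W (tl a)).map (Vm a) ≤ W (hd a) := by
      intro a
      rw [hWdef]
      simp only [Submodule.map_sup, sup_le_iff]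
      constructor
      · by_cases h : 0 < σ (tl a)
        · rw [if_pos h]
          refine le_trans ?_ le_sup_right
          rintro w ⟨u, hu, rfl⟩
          exact Submodule.subset_span
            (show PathReach tl hd Vm S U (hd a) (Vm a u) from PathReach.base (tl := tl) (hd := hd) (Vm := Vm) (S := S) (U := U) a h u hu)
        · rw [if_neg h]
          simp
      · refine le_trans ?_ le_sup_right
        rw [hRdef, Submodule.map_span]
        refine Submodule.span_le.mpr ?_
        rintro w ⟨u, hu, rfl⟩
        exact Submodule.subset_span (PathReach.step a u hu)
    refine le_trans ?_ (hz1ub _ ⟨W, hWsub, rfl⟩)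
    rw [king_sum_split σ (fun i => (Module.finrank ℂ (W i) : ℤ)), sub_eq_add_neg,
      ← Finset.sum_neg_distrib]
    refine add_le_add (Finset.sum_le_sum fun s hs => ?_) (Finset.sum_le_sum fun t ht => ?_)
    · simp only [Finset.mem_filter, Finset.mem_univ, true_and] at hs
      have hUW : U s ≤ W s := by simp only [hWdef, if_pos hs]; exact le_sup_left
      have : (Module.finrank ℂ (U s) : ℤ) ≤ (Module.finrank ℂ (W s) : ℤ) := by
        exact_mod_cast Submodule.finrank_mono hUW
      nlinarith
    · simp only [Finset.mem_filter, Finset.mem_univ, true_and] at ht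
      have hWR : W t = R U t := by
        simp only [hWdef, if_neg (by omega : ¬ 0 < σ t), bot_sup_eq]
      rw [hWR]
      ring_nf
      exact le_rfl
  refine ⟨z1, ⟨hz1, fun z hz => hz1ub z hz⟩, ?_⟩
  have : z1 = z2 := le_antisymm h12 h21
  rw [this]
  exact ⟨hz2, fun z hz => hz2ub z hz⟩
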